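/- Let ⋯ ⊆ F_1 ⊆ F_0 be a descending chain of free abelian groups in which each F_{i+1} is pure in F_i, and let H_i ≤ F_i be finitely generated subgroups with H_{i+1} ⊆ H_i for all i. Let H̄_i = {g ∈ F_i : there exists a nonzero integer n with n·g ∈ H_i} be the purification of H_i in F_i. Then each H̄_i is a finitely generated subgroup containing H_i, H̄_{i+1} ⊆ H̄_i with H̄_{i+1} pure in H̄_i for all i, and the map ∏_{i∈ℕ} H̄_i → ∏_{i∈ℕ} H̄_i sending (g_i) to (g_i − g_{i+1}) is surjective, i.e. lim¹ H̄_i = 0. (Consequently lim¹_fg of the inverse sequence (F_i) vanishes.) -/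

import Mathlib

open Module

/-- A submodule contained in a f.g. `ℤ`-submodule is f.g. -/
lemma fgOfLeFG13 {A : Type*} [AddCommGroup A] {K G : Submodule ℤ A}
    (hKG : K ≤ G) (hG : G.FG) : K.FG := by
  haveI : Module.Finite ℤ ↥G := Module.Finite.iff_fg.2 hG
  have hN : (Submodule.comap G.subtype K).FG := IsNoetherian.noetherian _
  have h2 := hN.map G.subtype
  rwa [Submodule.map_comap_subtype, inf_eq_right.2 hKG] at h2

/-- The purification of a f.g. subgroup inside a free group is f.g. -/
lemma purifyFG13 {A : Type*} [AddCommGroup A] (F Hs K : AddSubgroup A)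
    (hfree : Module.Free ℤ F) (hHfg : Hs.FG) (hHF : Hs ≤ F) (hKF : K ≤ F)
    (hK : ∀ g ∈ K, ∃ n : ℤ, n ≠ 0 ∧ n • g ∈ Hs) : K.FG := by
  classical
  haveI := hfree
  obtain ⟨S, hS⟩ := hHfg
  set ι := Module.Free.ChooseBasisIndex ℤ ↥F with hι
  let b : Basis ι ℤ ↥F := Module.Free.chooseBasis ℤ ↥F
  let T : Set ι := ⋃ s ∈ (S : Set A), if h : s ∈ F then (↑((b.repr ⟨s, h⟩).support) : Set ι) else ∅
  have hTfin : T.Finite := Set.Finite.biUnion S.finite_toSet (by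
    intro s _
    split
    · exact Finset.finite_toSet _
    · exact Set.finite_empty)
  let W : Submodule ℤ ↥F := Submodule.comap (b.repr : ↥F →ₗ[ℤ] (ι →₀ ℤ)) (Finsupp.supported ℤ ℤ T)
  have hmemW : ∀ x : ↥F, x ∈ W ↔ ∀ j ∉ T, b.repr x j = 0 := by
    intro x
    exact Finsupp.mem_supported' ℤ _
  let SW : Submodule ℤ A := W.map F.subtype.toIntLinearMap
  have hHsSW : ∀ h ∈ Hs, h ∈ SW := by
    have : AddSubgroup.closure (S : Set A) ≤ SW.toAddSubgroup := by
      rw [AddSubgroup.closure_le]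
      intro s hs
      have hsF : s ∈ F := hHF (hS ▸ AddSubgroup.subset_closure hs)
      refine ⟨⟨s, hsF⟩, (hmemW _).2 ?_, rfl⟩
      intro j hj
      by_contra hne
      exact hj (Set.mem_biUnion hs (by rw [dif_pos hsF]; exact Finsupp.mem_support_iff.2 hne))
    intro h hh
    exact this (hS ▸ hh)
  have hKW : ∀ g : A, g ∈ K → g ∈ SW := by
    intro g hg
    obtain ⟨n, hn, hnH⟩ := hK g hg
    obtain ⟨w, hwW, hweq⟩ := hHsSW _ hnH
    have hgF : g ∈ F := hKF hg
    have hw : w = n • (⟨g, hgF⟩ : ↥F) := by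
      apply Subtype.ext
      simpa using hweq
    refine ⟨⟨g, hgF⟩, (hmemW _).2 ?_, rfl⟩
    intro j hj
    have h0 : b.repr w j = 0 := (hmemW w).1 hwW j hj
    rw [hw, map_smul, Finsupp.smul_apply, smul_eq_mul] at h0
    exact (mul_eq_zero.1 h0).resolve_left hn
  have hWfg : W.FG := by
    have h1 : (Finsupp.supported ℤ ℤ T : Submodule ℤ (ι →₀ ℤ)).FG := by
      rw [Finsupp.supported_eq_span_single]
      exact Submodule.fg_def.2 ⟨_, hTfin.image _, rfl⟩
    have h2 : W = (Finsupp.supported ℤ ℤ T).map (b.repr.symm : (ι →₀ ℤ) →ₗ[ℤ] ↥F) :=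
      Submodule.comap_equiv_eq_map_symm b.repr _
    rw [h2]
    exact h1.map _
  have hKle : K.toIntSubmodule ≤ SW := fun g hg => hKW g hg
  have := fgOfLeFG13 hKle (hWfg.map _)
  rwa [Submodule.fg_iff_addSubgroup_fg, AddSubgroup.toIntSubmodule_toAddSubgroup] at this

/-- Rank step lemma: pure submodule of a f.g. torsion-free `ℤ`-module. -/
lemma rankStep13 {A : Type*} [AddCommGroup A] (K L : Submodule ℤ A)
    (hKL : K ≤ L) (hLfg : L.FG)
    (htf : ∀ (n : ℤ) (x : A), x ∈ L → n • x = 0 → n = 0 ∨ x = 0)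
    (hpure : ∀ g ∈ L, ∀ n : ℤ, n ≠ 0 → n • g ∈ K → g ∈ K) :
    finrank ℤ ↥K ≤ finrank ℤ ↥L ∧ (finrank ℤ ↥K = finrank ℤ ↥L → K = L) := by
  haveI : Module.Finite ℤ ↥L := Module.Finite.iff_fg.2 hLfg
  haveI : NoZeroSMulDivisors ℤ ↥L := ⟨by
    intro n x h
    have h2 : n • (x : A) = 0 := by
      have := congrArg Subtype.val h
      simpa using this
    rcases htf n x.1 x.2 h2 with h' | h'
    · exact Or.inl h'
    · exact Or.inr (Subtype.ext h')⟩
  set N : Submodule ℤ ↥L := K.comap L.subtype with hNdef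
  have hNmem : ∀ x : ↥L, x ∈ N ↔ (x : A) ∈ K := fun x => Iff.rfl
  haveI : Module.Finite ℤ (↥L ⧸ N) := Module.Finite.of_surjective N.mkQ (Submodule.mkQ_surjective N)
  haveI : NoZeroSMulDivisors ℤ (↥L ⧸ N) := ⟨by
    intro n q h
    by_cases hn : n = 0
    · exact Or.inl hn
    obtain ⟨y, rfl⟩ := Submodule.mkQ_surjective N q
    right
    have h' : (n • y : ↥L) ∈ N := by
      rwa [← map_smul, Submodule.mkQ_apply, Submodule.Quotient.mk_eq_zero] at h
    rw [Submodule.mkQ_apply, Submodule.Quotient.mk_eq_zero]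
    exact (hNmem y).2 (hpure y.1 y.2 n hn (by simpa using (hNmem _).1 h'))⟩
  obtain ⟨s, hs⟩ := Module.projective_lifting_property N.mkQ LinearMap.id (Submodule.mkQ_surjective N)
  have hsq : ∀ q, N.mkQ (s q) = q := fun q => LinearMap.congr_fun hs q
  let f : (↥N × (↥L ⧸ N)) →ₗ[ℤ] ↥L := N.subtype.coprod s
  have hf : Function.Bijective f := by
    constructor
    · intro p p' hpp'
      have hpp2 : (p.1 : ↥L) + s p.2 = (p'.1 : ↥L) + s p'.2 := hpp'
      have h1 : N.mkQ (p.1 : ↥L) = 0 := by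
        rw [Submodule.mkQ_apply, Submodule.Quotient.mk_eq_zero]; exact p.1.2
      have h1' : N.mkQ (p'.1 : ↥L) = 0 := by
        rw [Submodule.mkQ_apply, Submodule.Quotient.mk_eq_zero]; exact p'.1.2
      have h2 := congrArg N.mkQ hpp2
      rw [map_add, map_add, h1, h1', hsq, hsq, zero_add, zero_add] at h2
      have hn : (p.1 : ↥L) = (p'.1 : ↥L) := by
        rw [h2] at hpp2
        exact add_right_cancel hpp2
      exact Prod.ext (Subtype.ext hn) h2
    · intro x
      refine ⟨(⟨x - s (N.mkQ x), ?_⟩, N.mkQ x), ?_⟩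
      · have : N.mkQ (x - s (N.mkQ x)) = 0 := by
          simp [map_sub, hsq]
        rwa [Submodule.mkQ_apply, Submodule.Quotient.mk_eq_zero] at this
      · show (x - s (N.mkQ x)) + s (N.mkQ x) = x
        abel
  have e : ↥L ≃ₗ[ℤ] (↥N × (↥L ⧸ N)) := (LinearEquiv.ofBijective f hf).symm
  haveI : Module.Finite ℤ ↥N := Module.Finite.iff_fg.2 (IsNoetherian.noetherian N)
  have hrank : finrank ℤ ↥L = finrank ℤ ↥N + finrank ℤ (↥L ⧸ N) := by
    rw [e.finrank_eq, Module.finrank_prod]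
  have hNK : finrank ℤ ↥N = finrank ℤ ↥K :=
    (Submodule.comapSubtypeEquivOfLe hKL).finrank_eq
  constructor
  · omega
  · intro heq
    have hQ0 : finrank ℤ (↥L ⧸ N) = 0 := by omega
    haveI : Subsingleton (↥L ⧸ N) := Module.finrank_zero_iff.1 hQ0
    refine le_antisymm hKL ?_
    intro g hg
    have : N.mkQ ⟨g, hg⟩ = 0 := Subsingleton.elim _ _
    rw [Submodule.mkQ_apply, Submodule.Quotient.mk_eq_zero] at this
    exact this

/-- The purification of `Hs` inside `Fs`. -/
def purify13 {A : Type*} [AddCommGroup A] (Fs Hs : AddSubgroup A) : AddSubgroup A where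
  carrier := {g : A | g ∈ Fs ∧ ∃ n : ℤ, n ≠ 0 ∧ n • g ∈ Hs}
  zero_mem' := ⟨zero_mem _, 1, one_ne_zero, by simpa using zero_mem Hs⟩
  add_mem' := by
    rintro a b ⟨haF, m, hm, hmH⟩ ⟨hbF, n, hn, hnH⟩
    refine ⟨add_mem haF hbF, m * n, mul_ne_zero hm hn, ?_⟩
    rw [smul_add]
    refine add_mem ?_ ?_
    · rw [mul_comm, mul_smul]
      exact AddSubgroup.zsmul_mem _ hmH n
    · rw [mul_smul]
      exact AddSubgroup.zsmul_mem _ hnH m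
  neg_mem' := by
    rintro a ⟨haF, n, hn, hnH⟩
    exact ⟨neg_mem haF, n, hn, by rw [smul_neg]; exact neg_mem hnH⟩

theorem purify13_mem {A : Type*} [AddCommGroup A] {Fs Hs : AddSubgroup A} {g : A} :
    g ∈ purify13 Fs Hs ↔ g ∈ Fs ∧ ∃ n : ℤ, n ≠ 0 ∧ n • g ∈ Hs := Iff.rfl




/-- **Example on `lim¹_fg` of pure inclusions between free abelian groups.**
Given a descending chain `⋯ ⊆ F₁ ⊆ F₀` of free abelian groups with each `F_{i+1}`
pure in `F_i`, and finitely generated subgroups `H_i ≤ F_i` with `H_{i+1} ⊆ H_i`,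
the purifications `H̄_i = {g ∈ F_i | ∃ n ≠ 0, n • g ∈ H_i}` form a descending chain
of finitely generated subgroups, each containing `H_i`, with `H̄_{i+1}` pure in
`H̄_i`, and `lim¹ H̄_i = 0`, i.e. the map `(g_i) ↦ (g_i − g_{i+1})` on `∏ H̄_i`
is surjective. -/
theorem stmt13 (A : Type*) [AddCommGroup A]
    (F : ℕ → AddSubgroup A) (hFdesc : ∀ i, F (i + 1) ≤ F i)
    (hFfree : ∀ i, Module.Free ℤ (F i))
    (hFpure : ∀ i, ∀ g ∈ F i, ∀ n : ℤ, n ≠ 0 → n • g ∈ F (i + 1) → g ∈ F (i + 1))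
    (H : ℕ → AddSubgroup A) (hHF : ∀ i, H i ≤ F i)
    (hHfg : ∀ i, (H i).FG) (hHdesc : ∀ i, H (i + 1) ≤ H i) :
    ∃ Hb : ℕ → AddSubgroup A,
      (∀ i, (Hb i : Set A) = {g : A | g ∈ F i ∧ ∃ n : ℤ, n ≠ 0 ∧ n • g ∈ H i}) ∧
      (∀ i, (Hb i).FG) ∧
      (∀ i, H i ≤ Hb i) ∧
      (∀ i, Hb (i + 1) ≤ Hb i) ∧
      (∀ i, ∀ g ∈ Hb i, ∀ n : ℤ, n ≠ 0 → n • g ∈ Hb (i + 1) → g ∈ Hb (i + 1)) ∧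
      (∀ x : ∀ _ : ℕ, A, (∀ i, x i ∈ Hb i) →
        ∃ y : ∀ _ : ℕ, A, (∀ i, y i ∈ Hb i) ∧ ∀ i, x i = y i - y (i + 1)) := by
  classical
  set Hb : ℕ → AddSubgroup A := fun i => purify13 (F i) (H i) with hHb
  have hbF : ∀ i, Hb i ≤ F i := fun i g hg => hg.1
  have hfg : ∀ i, (Hb i).FG := fun i =>
    purifyFG13 (F i) (H i) (Hb i) (hFfree i) (hHfg i) (hHF i) (hbF i) (fun g hg => hg.2)
  have hle : ∀ i, H i ≤ Hb i := fun i g hg =>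
    ⟨hHF i hg, 1, one_ne_zero, by simpa using hg⟩
  have hdesc : ∀ i, Hb (i + 1) ≤ Hb i := by
    rintro i g ⟨hgF, n, hn, hnH⟩
    exact ⟨hFdesc i hgF, n, hn, hHdesc i hnH⟩
  have hpure : ∀ i, ∀ g ∈ Hb i, ∀ n : ℤ, n ≠ 0 → n • g ∈ Hb (i + 1) → g ∈ Hb (i + 1) := by
    rintro i g hg n hn ⟨h1, m, hm, hmn⟩
    refine ⟨hFpure i g hg.1 n hn h1, m * n, mul_ne_zero hm hn, ?_⟩
    rwa [mul_smul]
  refine ⟨Hb, fun i => rfl, hfg, hle, hdesc, hpure, ?_⟩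
  -- chain lemma
  have hchain : ∀ i j, i ≤ j → Hb j ≤ Hb i := by
    intro i j hij
    induction j, hij using Nat.le_induction with
    | base => exact le_rfl
    | succ j hij ih => exact le_trans (hdesc j) ih
  -- rank considerations
  set r : ℕ → ℕ := fun i => Module.finrank ℤ ↥((Hb i).toIntSubmodule) with hr
  have hstep : ∀ i, r (i + 1) ≤ r i ∧ (r (i + 1) = r i → Hb (i + 1) = Hb i) := by
    intro i
    have htf : ∀ (n : ℤ) (x : A), x ∈ (Hb i).toIntSubmodule → n • x = 0 → n = 0 ∨ x = 0 := by
      intro n x hx hnx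
      haveI := hFfree i
      have hxF : x ∈ F i := hbF i hx
      have : n • (⟨x, hxF⟩ : ↥(F i)) = 0 := by
        apply Subtype.ext
        simpa using hnx
      rcases (Module.Free.chooseBasis ℤ ↥(F i)).smul_eq_zero.1 this with h | h
      · exact Or.inl h
      · exact Or.inr (congrArg Subtype.val h)
    have := rankStep13 (Hb (i + 1)).toIntSubmodule (Hb i).toIntSubmodule
      (fun g hg => hdesc i hg)
      ((Submodule.fg_iff_addSubgroup_fg _).2
        (by rw [AddSubgroup.toIntSubmodule_toAddSubgroup]; exact hfg i))
      htf
      (fun g hg n hn hngK => hpure i g hg n hn hngK)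
    refine ⟨this.1, fun h => ?_⟩
    have h2 := this.2 h
    have h3 := congrArg (AddSubgroup.toIntSubmodule (M := A)).symm h2
    simpa using h3
  have hanti : ∀ i j, i ≤ j → r j ≤ r i := by
    intro i j hij
    induction j, hij using Nat.le_induction with
    | base => exact le_rfl
    | succ j hij ih => exact le_trans (hstep j).1 ih
  obtain ⟨N, hN⟩ : ∃ N, r N = sInf (Set.range r) :=
    Nat.sInf_mem (Set.range_nonempty r)
  have hconststep : ∀ i, N ≤ i → Hb (i + 1) = Hb i := by
    intro i hNi
    refine (hstep i).2 (le_antisymm (hstep i).1 ?_)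
    calc r i ≤ r N := hanti N i hNi
    _ = sInf (Set.range r) := hN
    _ ≤ r (i + 1) := Nat.sInf_le ⟨i + 1, rfl⟩
  have hconst : ∀ i, N ≤ i → Hb i = Hb N := by
    intro i hNi
    induction i, hNi using Nat.le_induction with
    | base => rfl
    | succ i hNi ih => rw [hconststep i hNi, ih]
  -- the construction
  intro x hx
  refine ⟨fun i => (∑ j ∈ Finset.Ico i N, x j) - (∑ j ∈ Finset.Ico N i, x j), ?_, ?_⟩
  · intro i
    refine sub_mem (AddSubgroup.sum_mem _ ?_) (AddSubgroup.sum_mem _ ?_)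
    · intro j hj
      exact hchain i j (Finset.mem_Ico.1 hj).1 (hx j)
    · intro j hj
      obtain ⟨hNj, hji⟩ := Finset.mem_Ico.1 hj
      rw [hconst i (le_trans hNj (le_of_lt hji)), ← hconst j hNj]
      exact hx j
  · intro i
    show x i = (∑ j ∈ Finset.Ico i N, x j - ∑ j ∈ Finset.Ico N i, x j) -
      (∑ j ∈ Finset.Ico (i + 1) N, x j - ∑ j ∈ Finset.Ico N (i + 1), x j)
    by_cases hiN : i < N
    · have h1 : Finset.Ico N i = ∅ := Finset.Ico_eq_empty (by omega)
      have h2 : Finset.Ico N (i + 1) = ∅ := Finset.Ico_eq_empty (by omega)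
      have h3 : ∑ j ∈ Finset.Ico i N, x j = x i + ∑ j ∈ Finset.Ico (i + 1) N, x j :=
        Finset.sum_eq_sum_Ico_succ_bot hiN _
      rw [h1, h2, h3]
      simp only [Finset.sum_empty, sub_zero]
      abel
    · have h1 : Finset.Ico i N = ∅ := Finset.Ico_eq_empty (by omega)
      have h2 : Finset.Ico (i + 1) N = ∅ := Finset.Ico_eq_empty (by omega)
      have h3 : ∑ j ∈ Finset.Ico N (i + 1), x j = (∑ j ∈ Finset.Ico N i, x j) + x i :=
        Finset.sum_Ico_succ_top (by omega) _
      rw [h1, h2, h3]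
      simp only [Finset.sum_empty, zero_sub]
      abel
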